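/- Let Ω be a standard Borel space, π an atomless probability measure on Ω, and p, l : Ω → Bool measurable maps that are balanced, i.e., for every j ∈ Bool, π({x : p(x) = true ∧ l(x) = j}) = π({x : p(x) = false ∧ l(x) = j}). Then there exists a measurable map h : Ω → Ω that is measure preserving for π (π(h⁻¹(A)) = π(A) for every measurable A ⊆ Ω) and satisfies, for π-almost every x, p(h(x)) ≠ p(x) and l(h(x)) = l(x). -/

import Mathlib

open MeasureTheory Set Filter ProbabilityTheory
open scoped Topology ENNReal

/-- Probability integral transform / quantile lemma: an atomless probability
measure `μ` on `ℝ` can be mapped onto any probability measure `ν` supported in `(0,1]`. -/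
lemma exists_map_eq_prob (μ ν : Measure ℝ) [IsProbabilityMeasure μ] [IsProbabilityMeasure ν]
    [NullSingletonClass μ] (hν0 : ν (Iic 0) = 0) (hν1 : ν (Iic 1) = 1) :
    ∃ f : ℝ → ℝ, Measurable f ∧ μ.map f = ν := by
  classical
  set Fν : ℝ → ℝ := fun x => cdf ν x with hFν
  have hFν1 : Fν 1 = 1 := by
    have := ofReal_cdf ν 1
    rw [hν1] at this
    have h1 := ENNReal.ofReal_eq_one.mp this
    simpa [Fν] using h1
  -- the quantile sets
  set S : ℝ → Set ℝ := fun t => {x | 0 ≤ x ∧ min t 1 ≤ Fν x} with hS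
  have hS1 : ∀ t, (1:ℝ) ∈ S t := fun t => ⟨zero_le_one, by rw [hFν1]; exact min_le_right _ _⟩
  have hSb : ∀ t, BddBelow (S t) := fun t => ⟨0, fun x hx => hx.1⟩
  set G : ℝ → ℝ := fun t => sInf (S t) with hG
  have hGmono : Monotone G := by
    intro t₁ t₂ h
    exact csInf_le_csInf (hSb _) ⟨1, hS1 _⟩
      (fun x hx => ⟨hx.1, le_trans (min_le_min h le_rfl) hx.2⟩)
  have hGnonneg : ∀ t, 0 ≤ G t := fun t => le_csInf ⟨1, hS1 t⟩ (fun x hx => hx.1)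
  -- right continuity of Fν gives `min t 1 ≤ Fν (G t)`
  have hkey1 : ∀ t, min t 1 ≤ Fν (G t) := by
    intro t
    by_contra hlt
    push_neg at hlt
    have hrc : ContinuousWithinAt Fν (Ici (G t)) (G t) := (cdf ν).right_continuous (G t)
    have hev : ∀ᶠ x in 𝓝[≥] (G t), Fν x < min t 1 := hrc.eventually_lt_const hlt
    rcases mem_nhdsGE_iff_exists_Ico_subset.mp hev with ⟨u, hu, hsub⟩
    have : G t < u := hu
    rcases (csInf_lt_iff (hSb t) ⟨1, hS1 t⟩).mp this with ⟨x, hxS, hxu⟩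
    have hGle : G t ≤ x := csInf_le (hSb t) hxS
    have : Fν x < min t 1 := hsub ⟨hGle, hxu⟩
    exact absurd hxS.2 (not_le.mpr this)
  have hkey2 : ∀ t y, 0 ≤ y → (G t ≤ y ↔ min t 1 ≤ Fν y) := by
    intro t y hy
    constructor
    · intro h
      exact le_trans (hkey1 t) ((cdf ν).mono h)
    · intro h
      exact csInf_le (hSb t) ⟨hy, h⟩
  -- the transport map
  set f : ℝ → ℝ := fun x => G (cdf μ x) with hf
  have hfm : Measurable f := hGmono.measurable.comp (monotone_cdf μ).measurable
  -- key computation : μ {x | cdf μ x ≤ s} = ofReal s for s ∈ [0,1)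
  have hclaimB : ∀ s : ℝ, 0 ≤ s → s < 1 → μ {x | cdf μ x ≤ s} = ENNReal.ofReal s := by
    intro s hs0 hs1
    set U : Set ℝ := {x | cdf μ x ≤ s} with hU
    have hbdd : BddAbove U := by
      have : ∀ᶠ b in atTop, s < cdf μ b := (tendsto_cdf_atTop μ).eventually_const_lt hs1
      rcases this.exists with ⟨b, hb⟩
      exact ⟨b, fun x hx => by
        by_contra hxb
        push_neg at hxb
        exact absurd (le_trans (monotone_cdf μ hxb.le) hx) (not_le.mpr hb)⟩
    rcases eq_empty_or_nonempty U with hUe | hUne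
    · have hsz : s ≤ 0 := by
        by_contra hpos
        push_neg at hpos
        have : ∀ᶠ b in atBot, cdf μ b < s := (tendsto_cdf_atBot μ).eventually_lt_const hpos
        rcases this.exists with ⟨b, hb⟩
        have hbU : b ∈ U := by simp only [hU, mem_setOf_eq]; exact hb.le
        rw [hUe] at hbU
        exact absurd hbU (notMem_empty b)
      have : s = 0 := le_antisymm hsz hs0
      simp [hUe, this]
    · set c : ℝ := sSup U with hc
      have hUsub : U ⊆ Iic c := fun x hx => le_csSup hbdd hx
      have hIio : Iio c ⊆ U := by
        intro x hx
        rcases exists_lt_of_lt_csSup hUne hx with ⟨u, huU, hxu⟩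
        exact le_trans (monotone_cdf μ hxu.le) huU
      -- cdf μ c = s
      have hcle : cdf μ c ≤ s := by
        -- left continuity at c from atomlessness
        have hsing : (cdf μ).measure {c} = 0 := by rw [measure_cdf]; exact measure_singleton c
        rw [StieltjesFunction.measure_singleton] at hsing
        have hll : Function.leftLim (cdf μ) c = cdf μ c := by
          have h1 : cdf μ c - Function.leftLim (cdf μ) c ≤ 0 := by
            by_contra hpos
            push_neg at hpos
            rw [ENNReal.ofReal_eq_zero] at hsing
            linarith
          have h2 := (monotone_cdf μ).leftLim_le (le_refl c)
          linarith
        rw [← hll]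
        refine le_of_tendsto ((monotone_cdf μ).tendsto_leftLim c) ?_
        filter_upwards [self_mem_nhdsWithin] with x hx
        exact hIio hx
      have hsle : s ≤ cdf μ c := by
        by_contra hlt
        push_neg at hlt
        have hrc : ContinuousWithinAt (cdf μ) (Ici c) c := (cdf μ).right_continuous c
        have hev : ∀ᶠ x in 𝓝[≥] c, cdf μ x < s := hrc.eventually_lt_const hlt
        rcases mem_nhdsGE_iff_exists_Ico_subset.mp hev with ⟨u, hu, hsub⟩
        rcases exists_between (show c < u from hu) with ⟨x, hcx, hxu⟩
        have : x ∈ U := by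
          simp only [hU, mem_setOf_eq]
          exact (hsub ⟨hcx.le, hxu⟩).le
        exact absurd (hUsub this) (not_le.mpr hcx)
      have hcs : cdf μ c = s := le_antisymm hcle hsle
      have hmU : μ U = μ (Iic c) := by
        refine le_antisymm (measure_mono hUsub) ?_
        calc μ (Iic c) = μ (Iio c) := (measure_congr (Iio_ae_eq_Iic (a := c))).symm
          _ ≤ μ U := measure_mono hIio
      rw [hmU, ← ofReal_cdf, hcs]
  -- conclude : map f μ = ν
  have hmap : IsProbabilityMeasure (μ.map f) := Measure.isProbabilityMeasure_map hfm.aemeasurable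
  refine ⟨f, hfm, ?_⟩
  refine Measure.ext_of_Iic (μ.map f) ν (fun y => ?_)
  rw [Measure.map_apply hfm measurableSet_Iic]
  rcases lt_or_ge y 0 with hy | hy
  · have h1 : f ⁻¹' Iic y = ∅ := by
      ext x
      simp only [mem_preimage, mem_Iic, mem_empty_iff_false, iff_false, not_le]
      exact lt_of_lt_of_le hy (hGnonneg _)
    have h2 : ν (Iic y) = 0 :=
      le_antisymm (le_trans (measure_mono (Iic_subset_Iic.mpr hy.le)) hν0.le) zero_le
    rw [h1, h2, measure_empty]
  · -- y ≥ 0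
    have hpre : f ⁻¹' Iic y = {x | cdf μ x ≤ Fν y} := by
      ext x
      simp only [mem_preimage, mem_Iic, mem_setOf_eq, hf]
      rw [hkey2 _ _ hy, min_eq_left (cdf_le_one μ x)]
    rw [hpre]
    rcases lt_or_ge (Fν y) 1 with hFy | hFy
    · rw [hclaimB _ (cdf_nonneg ν y) hFy, ofReal_cdf]
    · have hFy1 : Fν y = 1 := le_antisymm (cdf_le_one ν y) hFy
      have huniv : {x | cdf μ x ≤ Fν y} = univ := by
        ext x; simp [hFy1, cdf_le_one μ x]
      have hright : ν (Iic y) = 1 := by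
        rw [← ofReal_cdf ν y]
        simp [hFν] at hFy1
        simp [hFy1]
      rw [huniv, hright, measure_univ]

/-- Finite-measure version: an atomless finite measure on `ℝ` can be mapped onto any
finite measure of equal total mass supported in `(0,1]`. -/
lemma exists_map_eq_finite (μ ν : Measure ℝ) [IsFiniteMeasure μ] [IsFiniteMeasure ν]
    [NullSingletonClass μ] (hmass : μ Set.univ = ν Set.univ)
    (hν0 : ν (Iic 0) = 0) (hν1 : ν (Iic 1) = ν Set.univ) :
    ∃ f : ℝ → ℝ, Measurable f ∧ μ.map f = ν := by
  classical
  set c : ℝ≥0∞ := μ Set.univ with hc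
  rcases eq_or_ne c 0 with hc0 | hc0
  · have hμ0 : μ = 0 := Measure.measure_univ_eq_zero.mp hc0
    have hn : ν Set.univ = 0 := by rw [← hmass]; exact hc0
    have hν0' : ν = 0 := Measure.measure_univ_eq_zero.mp hn
    exact ⟨id, measurable_id, by rw [Measure.map_id, hμ0, hν0']⟩
  · have hctop : c ≠ ⊤ := measure_ne_top μ _
    set μ' : Measure ℝ := c⁻¹ • μ with hμ'
    set ν' : Measure ℝ := c⁻¹ • ν with hν'
    have hμp : IsProbabilityMeasure μ' := ⟨by
      rw [hμ', Measure.smul_apply, smul_eq_mul, ← hc, ENNReal.inv_mul_cancel hc0 hctop]⟩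
    have hνp : IsProbabilityMeasure ν' := ⟨by
      rw [hν', Measure.smul_apply, smul_eq_mul, ← hmass,
        ENNReal.inv_mul_cancel hc0 hctop]⟩
    have hμna : NullSingletonClass μ' := ⟨fun x => by
      rw [hμ', Measure.smul_apply, measure_singleton, smul_eq_mul, mul_zero]⟩
    have h0 : ν' (Iic 0) = 0 := by rw [hν', Measure.smul_apply, hν0, smul_eq_mul, mul_zero]
    have h1 : ν' (Iic 1) = 1 := by
      rw [hν', Measure.smul_apply, hν1, ← hmass, smul_eq_mul,
        ENNReal.inv_mul_cancel hc0 hctop]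
    obtain ⟨f, hfm, hfmap⟩ := exists_map_eq_prob μ' ν' h0 h1
    refine ⟨f, hfm, ?_⟩
    have : (c • μ').map f = c • ν' := by rw [Measure.map_smul, hfmap]
    rwa [hμ', hν', smul_smul, smul_smul, ENNReal.mul_inv_cancel hc0 hctop, one_smul,
      one_smul] at this

/-- Transfer to an abstract space: given a measurable embedding of `Ω` into `(0,1) ⊆ ℝ`
with a measurable left inverse, any two measurable sets of equal (finite) measure are
connected by a map transporting the restricted measure. -/
lemma exists_map_restrict {Ω : Type*} [MeasurableSpace Ω]
    (π : Measure Ω) [IsFiniteMeasure π] [NullSingletonClass π]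
    (e : Ω → ℝ) (he : MeasurableEmbedding e) (hrange : ∀ x, e x ∈ Ioo (0:ℝ) 1)
    (einv : ℝ → Ω) (heinv : Measurable einv) (hei : einv ∘ e = id)
    (A B : Set Ω) (hAB : π A = π B) :
    ∃ φ : Ω → Ω, Measurable φ ∧ (π.restrict A).map φ = π.restrict B := by
  classical
  set μ : Measure ℝ := (π.restrict A).map e with hμ
  set ν : Measure ℝ := (π.restrict B).map e with hν
  have hμfin : IsFiniteMeasure μ := ⟨by
    rw [hμ, Measure.map_apply he.measurable MeasurableSet.univ]
    exact lt_of_le_of_lt (Measure.restrict_le_self _) (measure_lt_top π _)⟩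
  have hνfin : IsFiniteMeasure ν := ⟨by
    rw [hν, Measure.map_apply he.measurable MeasurableSet.univ]
    exact lt_of_le_of_lt (Measure.restrict_le_self _) (measure_lt_top π _)⟩
  have hμna : NullSingletonClass μ := ⟨fun x => by
    rw [hμ, Measure.map_apply he.measurable (measurableSet_singleton x)]
    have : (e ⁻¹' {x}).Subsingleton := fun a ha b hb => he.injective (ha.trans hb.symm)
    exact this.measure_zero _⟩
  have hmass : μ Set.univ = ν Set.univ := by
    rw [hμ, hν, Measure.map_apply he.measurable MeasurableSet.univ,
      Measure.map_apply he.measurable MeasurableSet.univ]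
    simp only [Set.preimage_univ, Measure.restrict_apply_univ]
    exact hAB
  have hν0 : ν (Iic 0) = 0 := by
    rw [hν, Measure.map_apply he.measurable measurableSet_Iic]
    have : e ⁻¹' Iic 0 = ∅ := by
      ext x
      simp only [Set.mem_preimage, Set.mem_Iic, Set.mem_empty_iff_false, iff_false, not_le]
      exact (hrange x).1
    rw [this, measure_empty]
  have hν1 : ν (Iic 1) = ν Set.univ := by
    rw [hν, Measure.map_apply he.measurable measurableSet_Iic,
      Measure.map_apply he.measurable MeasurableSet.univ]
    congr 1
    ext x
    simp only [Set.mem_preimage, Set.mem_Iic, Set.preimage_univ, Set.mem_univ, iff_true]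
    exact (hrange x).2.le
  obtain ⟨f, hfm, hfmap⟩ := exists_map_eq_finite μ ν hmass hν0 hν1
  refine ⟨einv ∘ f ∘ e, heinv.comp (hfm.comp he.measurable), ?_⟩
  have h1 : (π.restrict A).map (einv ∘ f ∘ e) = (((π.restrict A).map e).map f).map einv := by
    rw [Measure.map_map hfm he.measurable, Measure.map_map heinv (hfm.comp he.measurable)]
  rw [h1, ← hμ, hfmap, hν, Measure.map_map heinv he.measurable, hei, Measure.map_id]

/-- The other direction of Lemma 3: on an atomless standard Borel probability space,
if the classifiers `p` and `l` are balanced, then there exists a measurable,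
measure preserving map `h` that, almost everywhere, flips the sensitive label `p`
and preserves the target label `l`. -/
theorem stmt7
    {Ω : Type*} [MeasurableSpace Ω] [StandardBorelSpace Ω]
    (π : Measure Ω) [IsProbabilityMeasure π] [NullSingletonClass π]
    (p l : Ω → Bool) (hp : Measurable p) (hl : Measurable l)
    (hbal : ∀ j : Bool,
      π {x | p x = true ∧ l x = j} = π {x | p x = false ∧ l x = j}) :
    ∃ h : Ω → Ω, Measurable h ∧
      (∀ A : Set Ω, MeasurableSet A → π (h ⁻¹' A) = π A) ∧
      (∀ᵐ x ∂π, p (h x) ≠ p x ∧ l (h x) = l x) := by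
  classical
  -- `Ω` is nonempty
  have hne : Nonempty Ω := by
    by_contra hemp
    rw [not_nonempty_iff] at hemp
    have : π Set.univ = 0 := by
      rw [Set.univ_eq_empty_iff.mpr hemp, measure_empty]
    rw [measure_univ] at this
    exact one_ne_zero this
  -- a measurable embedding of `Ω` into `(0,1) ⊆ ℝ`
  obtain ⟨e₀, he₀⟩ := exists_measurableEmbedding_real Ω
  set g : ℝ → ℝ := fun x => Real.arctan x / Real.pi + 1/2 with hg
  have hginj : Function.Injective g := by
    intro a b hab
    apply Real.arctan_injective
    have hpi : Real.pi ≠ 0 := ne_of_gt Real.pi_pos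
    simp only [hg, add_left_inj, div_left_inj' hpi] at hab
    exact hab
  have hgm : Measurable g :=
    ((Real.continuous_arctan.div_const _).add continuous_const).measurable
  have hge : MeasurableEmbedding g := hgm.measurableEmbedding hginj
  set e : Ω → ℝ := g ∘ e₀ with he'
  have he : MeasurableEmbedding e := hge.comp he₀
  have hrange : ∀ x, e x ∈ Set.Ioo (0:ℝ) 1 := by
    intro x
    have h1 : -(Real.pi/2) < Real.arctan (e₀ x) := Real.neg_pi_div_two_lt_arctan _
    have h2 : Real.arctan (e₀ x) < Real.pi/2 := Real.arctan_lt_pi_div_two _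
    have hpi : (0:ℝ) < Real.pi := Real.pi_pos
    have hl2 : -(1/2:ℝ) < Real.arctan (e₀ x) / Real.pi := by
      rw [lt_div_iff₀ hpi]; nlinarith
    have hr2 : Real.arctan (e₀ x) / Real.pi < 1/2 := by
      rw [div_lt_iff₀ hpi]; nlinarith
    constructor
    · show 0 < Real.arctan (e₀ x) / Real.pi + 1/2
      linarith
    · show Real.arctan (e₀ x) / Real.pi + 1/2 < 1
      linarith
  -- a measurable left inverse of `e`
  obtain ⟨einv, heinv, hei⟩ := he.exists_measurable_extend
    (measurable_id (α := Ω)) (fun _ => hne)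
  -- the four pieces
  set S : Bool → Bool → Set Ω := fun i j => {x | p x = i ∧ l x = j} with hSdef
  have hSmeas : ∀ i j, MeasurableSet (S i j) := by
    intro i j
    have : S i j = p ⁻¹' {i} ∩ l ⁻¹' {j} := by
      ext x; simp [hSdef]
    rw [this]
    exact (hp (measurableSet_singleton i)).inter (hl (measurableSet_singleton j))
  have hSbal : ∀ i j, π (S i j) = π (S (!i) j) := by
    intro i j
    cases i
    · exact (hbal j).symm
    · exact hbal j
  have key : ∀ i j, ∃ φ : Ω → Ω, Measurable φ ∧
      (π.restrict (S i j)).map φ = π.restrict (S (!i) j) := by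
    intro i j
    exact exists_map_restrict π e he hrange einv heinv hei _ _ (hSbal i j)
  choose φ hφm hφmap using key
  -- the global map
  set h : Ω → Ω := fun x =>
    if p x = true then
      (if l x = true then φ true true x else φ true false x)
    else
      (if l x = true then φ false true x else φ false false x) with hhdef
  have hh : ∀ x, h x = φ (p x) (l x) x := by
    intro x
    cases hpx : p x <;> cases hlx : l x <;> simp [hhdef, hpx, hlx]
  have hhm : Measurable h := by
    apply Measurable.ite (hp (measurableSet_singleton true)) <;>
      apply Measurable.ite (hl (measurableSet_singleton true)) <;>
      · exact hφm _ _
  -- membership in pieces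
  have hmemS : ∀ x, x ∈ S (p x) (l x) := fun x => ⟨rfl, rfl⟩
  -- key per-piece computation
  have K1 : ∀ (i j : Bool) (A : Set Ω), MeasurableSet A →
      π (h ⁻¹' A ∩ S i j) = π (A ∩ S (!i) j) := by
    intro i j A hA
    have hset : h ⁻¹' A ∩ S i j = φ i j ⁻¹' A ∩ S i j := by
      ext x
      simp only [Set.mem_inter_iff, Set.mem_preimage, and_congr_left_iff]
      intro hx
      rw [hh x, hx.1, hx.2]
    rw [hset, ← Measure.restrict_apply ((hφm i j) hA),
      ← Measure.map_apply (hφm i j) hA, hφmap i j, Measure.restrict_apply hA]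
  -- decomposition of a measure into the four pieces
  have hdec : ∀ T : Set Ω, π T =
      π (T ∩ S true true) + π (T ∩ S true false) +
      (π (T ∩ S false true) + π (T ∩ S false false)) := by
    intro T
    have hPt : MeasurableSet (p ⁻¹' {true}) := hp (measurableSet_singleton true)
    have hLt : MeasurableSet (l ⁻¹' {true}) := hl (measurableSet_singleton true)
    have e1 : π T = π (T ∩ p ⁻¹' {true}) + π (T \ p ⁻¹' {true}) :=
      (measure_inter_add_diff T hPt).symm
    have e2 : π (T ∩ p ⁻¹' {true}) =
        π ((T ∩ p ⁻¹' {true}) ∩ l ⁻¹' {true}) + π ((T ∩ p ⁻¹' {true}) \ l ⁻¹' {true}) :=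
      (measure_inter_add_diff _ hLt).symm
    have e3 : π (T \ p ⁻¹' {true}) =
        π ((T \ p ⁻¹' {true}) ∩ l ⁻¹' {true}) + π ((T \ p ⁻¹' {true}) \ l ⁻¹' {true}) :=
      (measure_inter_add_diff _ hLt).symm
    have s1 : (T ∩ p ⁻¹' {true}) ∩ l ⁻¹' {true} = T ∩ S true true := by
      ext x; by_cases hpx : p x = true <;> by_cases hlx : l x = true <;>
        simp [hSdef, hpx, hlx]
    have s2 : (T ∩ p ⁻¹' {true}) \ l ⁻¹' {true} = T ∩ S true false := by
      ext x
      cases hpx : p x <;> cases hlx : l x <;> simp [hSdef, hpx, hlx]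
    have s3 : (T \ p ⁻¹' {true}) ∩ l ⁻¹' {true} = T ∩ S false true := by
      ext x
      cases hpx : p x <;> cases hlx : l x <;> simp [hSdef, hpx, hlx]
    have s4 : (T \ p ⁻¹' {true}) \ l ⁻¹' {true} = T ∩ S false false := by
      ext x
      cases hpx : p x <;> cases hlx : l x <;> simp [hSdef, hpx, hlx]
    rw [e1, e2, e3, s1, s2, s3, s4]
  refine ⟨h, hhm, ?_, ?_⟩
  · intro A hA
    rw [hdec (h ⁻¹' A), K1 true true A hA, K1 true false A hA, K1 false true A hA,
      K1 false false A hA, hdec A]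
    simp only [Bool.not_true, Bool.not_false]
    ring
  · -- almost everywhere flipping
    have hnull : ∀ i j, π (φ i j ⁻¹' (S (!i) j)ᶜ ∩ S i j) = 0 := by
      intro i j
      rw [← Measure.restrict_apply ((hφm i j) (hSmeas (!i) j).compl),
        ← Measure.map_apply (hφm i j) (hSmeas (!i) j).compl, hφmap i j,
        Measure.restrict_apply (hSmeas (!i) j).compl, Set.compl_inter_self]
      exact measure_empty
    set N : Set Ω :=
      (φ true true ⁻¹' (S false true)ᶜ ∩ S true true) ∪
      (φ true false ⁻¹' (S false false)ᶜ ∩ S true false) ∪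
      (φ false true ⁻¹' (S true true)ᶜ ∩ S false true) ∪
      (φ false false ⁻¹' (S true false)ᶜ ∩ S false false) with hN
    have hNnull : π N = 0 := by
      rw [hN]
      refine measure_union_null (measure_union_null (measure_union_null ?_ ?_) ?_) ?_
      · exact hnull true true
      · exact hnull true false
      · exact hnull false true
      · exact hnull false false
    rw [MeasureTheory.ae_iff]
    refine measure_mono_null ?_ hNnull
    intro x hx
    simp only [Set.mem_setOf_eq, not_and_or, ne_eq, not_not] at hx
    by_contra hxN
    -- if `x ∉ N`, then `φ (p x) (l x) x ∈ S (!(p x)) (l x)`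
    have hmem : φ (p x) (l x) x ∈ S (!(p x)) (l x) := by
      by_contra hc
      apply hxN
      have hxS : x ∈ S (p x) (l x) := hmemS x
      rw [hN]
      cases hpx : p x <;> cases hlx : l x <;>
        { rw [hpx, hlx] at hc hxS
          simp only [Set.mem_union, Set.mem_inter_iff, Set.mem_preimage, Set.mem_compl_iff]
          tauto }
    have hph : p (h x) = !(p x) := by rw [hh x]; exact hmem.1
    have hlh : l (h x) = l x := by rw [hh x]; exact hmem.2
    rcases hx with hx | hx
    · rw [hph] at hx
      cases p x <;> simp at hx
    · exact hx hlh
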